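/- Let A be a real n×n matrix, and suppose there exist a symmetric positive definite X and matrices such that the bounded-real-lemma LMI [[A X + X A^T + B B^T, X C^T + B D^T],[C X + D B^T, D D^T − γ² I]] < 0 holds for γ > 0 (equivalently, via Schur complement, A X + X A^T + B B^T + (X C^T + B D^T)(γ² I − D D^T)⁻¹(C X + D B^T) < 0 with γ² I − D D^T > 0). Then A is Hurwitz and the H∞ norm of G(s) = C(sI−A)⁻¹B + D, i.e., sup_{ω∈ℝ} σ_max(G(iω)), is strictly less than γ. -/

import Mathlib

open Matrix

/-- A real square matrix is Hurwitz if every (complex) eigenvalue has negative real part. -/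
def Hurwitz {n : ℕ} (M : Matrix (Fin n) (Fin n) ℝ) : Prop :=
  ∀ μ ∈ spectrum ℂ (M.map (Complex.ofReal)), μ.re < 0

/-- The largest singular value of a complex matrix, as the operator norm of the induced
map between Euclidean spaces. -/
noncomputable def sigmaMax {m p : ℕ} (M : Matrix (Fin m) (Fin p) ℂ) : ℝ :=
  ‖LinearMap.toContinuousLinearMap (Matrix.toEuclideanLin M)‖

namespace BRLaux

lemma star_dot {l m : Type*} [Fintype l] [Fintype m] (M : Matrix l m ℂ) (x : m → ℂ)
    (y : l → ℂ) : star (M *ᵥ x) ⬝ᵥ y = star x ⬝ᵥ (Mᴴ *ᵥ y) := by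
  rw [Matrix.star_mulVec, ← Matrix.dotProduct_mulVec]

lemma map_mul' {l m o : Type*} [Fintype m] (M : Matrix l m ℝ) (N : Matrix m o ℝ) :
    (M * N).map Complex.ofReal = M.map Complex.ofReal * N.map Complex.ofReal :=
  Matrix.map_mul (f := Complex.ofRealHom)

lemma map_add' {l m : Type*} (M N : Matrix l m ℝ) :
    (M + N).map Complex.ofReal = M.map Complex.ofReal + N.map Complex.ofReal :=
  Matrix.map_add _ (by simp) M N

lemma conjT_map {l m : Type*} (M : Matrix l m ℝ) :
    (M.map Complex.ofReal)ᴴ = Mᵀ.map Complex.ofReal := by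
  ext i j; simp [Matrix.conjTranspose_apply, Complex.conj_ofReal]

lemma re_quad {ι : Type*} [Fintype ι] (M : Matrix ι ι ℝ) (v : ι → ℂ) :
    (star v ⬝ᵥ ((M.map Complex.ofReal) *ᵥ v)).re =
      (fun i => (v i).re) ⬝ᵥ (M *ᵥ fun i => (v i).re) +
      (fun i => (v i).im) ⬝ᵥ (M *ᵥ fun i => (v i).im) := by
  simp only [dotProduct, Matrix.mulVec, Matrix.map_apply, Pi.star_apply,
    Finset.mul_sum, Complex.re_sum, ← Finset.sum_add_distrib]
  refine Finset.sum_congr rfl fun i _ => Finset.sum_congr rfl fun j _ => ?_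
  simp [Complex.mul_re, Complex.conj_re, Complex.conj_im]

lemma re_quad_pos {ι : Type*} [Fintype ι] {M : Matrix ι ι ℝ}
    (hpos : ∀ x : ι → ℝ, x ≠ 0 → 0 < x ⬝ᵥ (M *ᵥ x)) {v : ι → ℂ} (hv : v ≠ 0) :
    0 < (star v ⬝ᵥ ((M.map Complex.ofReal) *ᵥ v)).re := by
  rw [re_quad]
  set a : ι → ℝ := fun i => (v i).re with ha
  set b : ι → ℝ := fun i => (v i).im with hb
  have hab : a ≠ 0 ∨ b ≠ 0 := by
    by_contra h
    push_neg at h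
    apply hv
    funext i
    have h1 : a i = 0 := by rw [h.1]; rfl
    have h2 : b i = 0 := by rw [h.2]; rfl
    exact Complex.ext h1 h2
  have hpsd : ∀ x : ι → ℝ, 0 ≤ x ⬝ᵥ (M *ᵥ x) := by
    intro x
    by_cases hx : x = 0
    · simp [hx]
    · exact (hpos x hx).le
  rcases hab with h | h
  · exact add_pos_of_pos_of_nonneg (hpos a h) (hpsd b)
  · exact add_pos_of_nonneg_of_pos (hpsd a) (hpos b h)

lemma posdef_delta {ι : Type*} [Fintype ι] [DecidableEq ι] {N : Matrix ι ι ℝ} (hN : N.PosDef) :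
    ∃ δ > 0, ∀ x : ι → ℝ, δ * (∑ i, x i ^ 2) ≤ x ⬝ᵥ (N *ᵥ x) := by
  rcases isEmpty_or_nonempty ι with hι | hι
  · exact ⟨1, one_pos, fun x => by simp [dotProduct]⟩
  · set E := EuclideanSpace ℝ ι
    set e := WithLp.equiv 2 (ι → ℝ)
    set f : E → ℝ := fun y => (e y) ⬝ᵥ (N *ᵥ (e y)) with hf
    have hco : ∀ i, Continuous fun y : E => e y i :=
      fun i => (continuous_apply i).comp (PiLp.continuous_ofLp _ _)
    have hcont : Continuous f := by
      have : f = fun y : E => ∑ i, (e y i) * ∑ j, N i j * (e y j) := by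
        funext y; simp [hf, dotProduct, Matrix.mulVec]
      rw [this]
      exact continuous_finset_sum _ fun i _ => ((hco i).mul
        (continuous_finset_sum _ fun j _ => continuous_const.mul (hco j)))
    obtain ⟨i0⟩ := hι
    have hx₀ : (EuclideanSpace.single i0 (1:ℝ)) ∈ Metric.sphere (0:E) 1 := by
      simp [EuclideanSpace.norm_single]
    obtain ⟨z, hz_mem, hz_min⟩ := (isCompact_sphere (0:E) 1).exists_isMinOn ⟨_, hx₀⟩
      hcont.continuousOn
    have hz_norm : ‖z‖ = 1 := by simpa using hz_mem
    have hz_ne : e z ≠ 0 := by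
      intro h
      have : z = 0 := by
        ext i; exact congrFun h i
      simp [this] at hz_norm
    have hδpos : 0 < f z := by
      have := hN.dotProduct_mulVec_pos hz_ne
      simpa [hf] using this
    refine ⟨f z, hδpos, fun x => ?_⟩
    by_cases hx : x = 0
    · simp [hx, dotProduct]
    · set y : E := e.symm x with hy
      have hyne : y ≠ 0 := by
        intro h; apply hx
        have := congrArg e h
        rw [← e.apply_symm_apply x, ← hy, h]
        rfl
      set c : ℝ := ‖y‖ with hc
      have hcpos : 0 < c := norm_pos_iff.mpr hyne
      have hmem : c⁻¹ • y ∈ Metric.sphere (0:E) 1 := by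
        simp [norm_smul, abs_of_pos (inv_pos.mpr hcpos), hc, inv_mul_cancel₀, hyne]
      have hmin := hz_min hmem
      have he_smul : e (c⁻¹ • y) = c⁻¹ • x := rfl
      have hfval : f (c⁻¹ • y) = c⁻¹ * c⁻¹ * (x ⬝ᵥ (N *ᵥ x)) := by
        simp [hf, he_smul, smul_dotProduct, Matrix.mulVec_smul, dotProduct_smul,
          smul_eq_mul]
        ring
      have hnorm2 : c ^ 2 = ∑ i, x i ^ 2 := by
        rw [hc, EuclideanSpace.norm_eq, Real.sq_sqrt (by positivity)]
        refine Finset.sum_congr rfl fun i _ => ?_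
        have : e.symm x i = x i := rfl
        simp [hy, this, Real.norm_eq_abs, sq_abs]
      have : f z ≤ c⁻¹ * c⁻¹ * (x ⬝ᵥ (N *ᵥ x)) := by
        simpa [hfval] using hmin
      have h2 := mul_le_mul_of_nonneg_left this (le_of_lt (mul_pos hcpos hcpos))
      calc f z * ∑ i, x i ^ 2 = (c * c) * f z := by rw [← hnorm2]; ring
        _ ≤ (c * c) * (c⁻¹ * c⁻¹ * (x ⬝ᵥ (N *ᵥ x))) := h2
        _ = x ⬝ᵥ (N *ᵥ x) := by field_simp

lemma euc_normsq {q : ℕ} (x : Fin q → ℂ) :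
    ‖(WithLp.equiv 2 (Fin q → ℂ)).symm x‖ ^ 2 = (star x ⬝ᵥ x).re := by
  rw [EuclideanSpace.norm_eq, Real.sq_sqrt (by positivity)]
  simp only [dotProduct, Pi.star_apply, Complex.re_sum]
  refine Finset.sum_congr rfl fun i _ => ?_
  have : ((WithLp.equiv 2 (Fin q → ℂ)).symm x) i = x i := rfl
  rw [this]
  simp [Complex.normSq_apply, Complex.sq_norm, Complex.mul_re]

lemma euc_cs {q : ℕ} (a b : Fin q → ℂ) :
    (star a ⬝ᵥ b).re ≤ ‖(WithLp.equiv 2 (Fin q → ℂ)).symm a‖ *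
      ‖(WithLp.equiv 2 (Fin q → ℂ)).symm b‖ := by
  have h : (inner ℂ ((WithLp.equiv 2 (Fin q → ℂ)).symm a)
      ((WithLp.equiv 2 (Fin q → ℂ)).symm b) : ℂ) = star a ⬝ᵥ b := by
    rw [PiLp.inner_apply]
    simp only [dotProduct, Pi.star_apply, RCLike.inner_apply, starRingEnd_apply]
    exact Finset.sum_congr rfl fun i _ => mul_comm _ _
  calc (star a ⬝ᵥ b).re = (inner ℂ ((WithLp.equiv 2 (Fin q → ℂ)).symm a)
        ((WithLp.equiv 2 (Fin q → ℂ)).symm b) : ℂ).re := by rw [h]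
    _ ≤ ‖(inner ℂ ((WithLp.equiv 2 (Fin q → ℂ)).symm a)
        ((WithLp.equiv 2 (Fin q → ℂ)).symm b) : ℂ)‖ := Complex.re_le_norm _
    _ ≤ _ := by
        exact norm_inner_le_norm _ _

lemma spec_iff_det {k : ℕ} (M : Matrix (Fin k) (Fin k) ℂ) (μ : ℂ) :
    μ ∈ spectrum ℂ M ↔ (μ • (1 : Matrix (Fin k) (Fin k) ℂ) - M).det = 0 := by
  rw [spectrum.mem_iff, Matrix.isUnit_iff_isUnit_det, isUnit_iff_ne_zero, not_not,
    Algebra.algebraMap_eq_smul_one]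

lemma spec_eigvec {k : ℕ} (M : Matrix (Fin k) (Fin k) ℂ) (μ : ℂ) (hμ : μ ∈ spectrum ℂ M) :
    ∃ w : Fin k → ℂ, w ≠ 0 ∧ Mᵀ *ᵥ w = μ • w := by
  rw [spec_iff_det] at hμ
  have hdet : (μ • (1 : Matrix (Fin k) (Fin k) ℂ) - M)ᵀ.det = 0 := by
    rw [Matrix.det_transpose]; exact hμ
  obtain ⟨w, hw0, hw⟩ := (Matrix.exists_mulVec_eq_zero_iff).mpr hdet
  refine ⟨w, hw0, ?_⟩
  have : (μ • (1 : Matrix (Fin k) (Fin k) ℂ))ᵀ *ᵥ w - Mᵀ *ᵥ w = 0 := by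
    rw [← Matrix.sub_mulVec, ← Matrix.transpose_sub]; exact hw
  have h1 : (μ • (1 : Matrix (Fin k) (Fin k) ℂ))ᵀ *ᵥ w = μ • w := by
    rw [Matrix.transpose_smul, Matrix.transpose_one, Matrix.smul_mulVec,
      Matrix.one_mulVec]
  rw [h1] at this
  rw [sub_eq_zero] at this
  exact this.symm

lemma hurwitz_of_lyap {n : ℕ} (A X : Matrix (Fin n) (Fin n) ℝ)
    (hXpos : ∀ x : Fin n → ℝ, x ≠ 0 → 0 < x ⬝ᵥ (X *ᵥ x))
    (hY : ∀ x : Fin n → ℝ, x ≠ 0 → 0 < x ⬝ᵥ ((-(A * X + X * Aᵀ)) *ᵥ x)) :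
    Hurwitz A := by
  intro μ hμ
  obtain ⟨w, hw0, hw⟩ := spec_eigvec (A.map Complex.ofReal) μ hμ
  have hwT : (Aᵀ.map Complex.ofReal) *ᵥ w = μ • w := by
    rw [Matrix.transpose_map]
    exact hw
  set Xc := X.map Complex.ofReal with hXc
  set q : ℂ := star w ⬝ᵥ (Xc *ᵥ w) with hq
  have hqpos : 0 < q.re := re_quad_pos hXpos hw0
  set E : ℂ := star w ⬝ᵥ (((A * X + X * Aᵀ).map Complex.ofReal) *ᵥ w) with hE
  have hEre : E.re < 0 := by
    have h1 := re_quad_pos hY hw0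
    have h2 : ((-(A * X + X * Aᵀ)).map Complex.ofReal) = -((A * X + X * Aᵀ).map Complex.ofReal) := by
      ext i j; simp
    rw [h2] at h1
    simp only [Matrix.neg_mulVec, dotProduct_neg, Complex.neg_re] at h1
    rw [hE]
    linarith [h1]
  have hAc : (Aᵀ.map Complex.ofReal)ᴴ = A.map Complex.ofReal := by
    rw [conjT_map, Matrix.transpose_transpose]
  have t1 : star w ⬝ᵥ ((A.map Complex.ofReal * Xc) *ᵥ w) = (starRingEnd ℂ) μ * q := by
    rw [← Matrix.mulVec_mulVec, ← hAc, ← star_dot, hwT, star_smul, smul_dotProduct]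
    rw [smul_eq_mul, starRingEnd_apply, hq]
  have t2 : star w ⬝ᵥ ((Xc * Aᵀ.map Complex.ofReal) *ᵥ w) = μ * q := by
    rw [← Matrix.mulVec_mulVec, hwT, Matrix.mulVec_smul, dotProduct_smul,
      smul_eq_mul, hq]
  have hEval : E = (starRingEnd ℂ) μ * q + μ * q := by
    rw [hE, map_add', map_mul', map_mul', Matrix.add_mulVec, dotProduct_add, ← hXc,
      t1, t2]
  have hE2 : E = ((2 * μ.re : ℝ) : ℂ) * q := by
    have h3 : (starRingEnd ℂ) μ * q + μ * q = (μ + (starRingEnd ℂ) μ) * q := by ring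
    rw [hEval, h3, Complex.add_conj]
  have hre : E.re = 2 * μ.re * q.re := by
    rw [hE2]
    simp [Complex.mul_re]
  nlinarith [hqpos, hEre, hre]

lemma star_sum_elim {l m : Type*} (x : l → ℂ) (y : m → ℂ) :
    star (Sum.elim x y) = Sum.elim (star x) (star y) := by
  funext i; cases i <;> rfl

lemma quad_identity {n m p : ℕ} (A' X' : Matrix (Fin n) (Fin n) ℂ)
    (B' : Matrix (Fin n) (Fin p) ℂ) (C' : Matrix (Fin m) (Fin n) ℂ)
    (D' : Matrix (Fin m) (Fin p) ℂ) (γ2 : ℂ) (ξ : Fin n → ℂ) (u : Fin m → ℂ) :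
    star (Sum.elim ξ u) ⬝ᵥ
      ((Matrix.fromBlocks (A' * X' + X' * A'ᴴ + B' * B'ᴴ) (X' * C'ᴴ + B' * D'ᴴ)
        (C' * X' + D' * B'ᴴ) (D' * D'ᴴ - γ2 • 1)) *ᵥ Sum.elim ξ u) =
      (star ξ ⬝ᵥ (X' *ᵥ (A'ᴴ *ᵥ ξ + C'ᴴ *ᵥ u)) +
        star (A'ᴴ *ᵥ ξ + C'ᴴ *ᵥ u) ⬝ᵥ (X' *ᵥ ξ)) +
      star (B'ᴴ *ᵥ ξ + D'ᴴ *ᵥ u) ⬝ᵥ (B'ᴴ *ᵥ ξ + D'ᴴ *ᵥ u) - γ2 * (star u ⬝ᵥ u) := by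
  simp only [Matrix.fromBlocks_mulVec, Sum.elim_comp_inl, Sum.elim_comp_inr,
    star_sum_elim, sumElim_dotProduct_sumElim,
    Matrix.add_mulVec, Matrix.sub_mulVec, ← Matrix.mulVec_mulVec,
    Matrix.smul_mulVec, Matrix.one_mulVec, Matrix.mulVec_add,
    star_add, dotProduct_add, add_dotProduct, dotProduct_sub,
    dotProduct_smul, smul_eq_mul, star_dot, Matrix.conjTranspose_conjTranspose]
  ring

lemma sq_trick {ng nx c : ℝ} (h0 : 0 ≤ ng) (hc : 0 ≤ c) (hx : 0 ≤ nx)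
    (key : ng ^ 2 ≤ nx * (c * ng)) : ng ≤ c * nx := by
  rcases eq_or_lt_of_le h0 with h | h
  · rw [← h]
    exact mul_nonneg hc hx
  · nlinarith [key, h]

set_option maxHeartbeats 2000000 in
lemma omega_bound {n m p : ℕ} (A : Matrix (Fin n) (Fin n) ℝ) (B : Matrix (Fin n) (Fin p) ℝ)
    (C : Matrix (Fin m) (Fin n) ℝ) (D : Matrix (Fin m) (Fin p) ℝ)
    (X : Matrix (Fin n) (Fin n) ℝ) (γ : ℝ) (hγ : 0 < γ) (δ : ℝ) (hδ : 0 < δ)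
    (hδγ : δ ≤ γ ^ 2)
    (hδle : ∀ x : (Fin n ⊕ Fin m) → ℝ, δ * (∑ i, x i ^ 2) ≤
      x ⬝ᵥ ((-(Matrix.fromBlocks
        (A * X + X * Aᵀ + B * Bᵀ) (X * Cᵀ + B * Dᵀ)
        (C * X + D * Bᵀ) (D * Dᵀ - γ ^ 2 • (1 : Matrix (Fin m) (Fin m) ℝ)))) *ᵥ x))
    (hHur : Hurwitz A) (ω : ℝ) :
    sigmaMax ((C.map Complex.ofReal) *
        (((ω : ℂ) * Complex.I) • (1 : Matrix (Fin n) (Fin n) ℂ) - A.map Complex.ofReal)⁻¹ *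
        (B.map Complex.ofReal) + D.map Complex.ofReal) ≤ Real.sqrt (γ ^ 2 - δ) := by
  classical
  set Ac := A.map Complex.ofReal with hAc
  set Bc := B.map Complex.ofReal with hBc
  set Cc := C.map Complex.ofReal with hCc
  set Dc := D.map Complex.ofReal with hDc
  set Xc := X.map Complex.ofReal with hXc
  set s : ℂ := (ω : ℂ) * Complex.I with hs
  set S : Matrix (Fin n) (Fin n) ℂ := s • 1 - Ac with hS
  set c : ℝ := Real.sqrt (γ ^ 2 - δ) with hcdef
  have hsre : s.re = 0 := by simp [hs]
  have hstars : star s = -s := by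
    rw [hs, star_mul', Complex.star_def, Complex.conj_I, Complex.conj_ofReal]
    ring
  have hdetS : S.det ≠ 0 := by
    intro h
    have hspec : s ∈ spectrum ℂ Ac := (spec_iff_det Ac s).mpr (by rw [← hS]; exact h)
    have := hHur s hspec
    rw [hsre] at this
    exact lt_irrefl 0 this
  have hdetSH : Sᴴ.det ≠ 0 := by
    rw [Matrix.det_conjTranspose]
    simpa using hdetS
  have hSinv : S⁻¹ * S = 1 := Matrix.nonsing_inv_mul _ (isUnit_iff_ne_zero.mpr hdetS)
  have hSinvH : Sᴴ * (S⁻¹)ᴴ = 1 := by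
    rw [← Matrix.conjTranspose_mul, hSinv, Matrix.conjTranspose_one]
  set G : Matrix (Fin m) (Fin p) ℂ := Cc * S⁻¹ * Bc + Dc with hG
  -- the real LMI matrix, complexified
  have hmap : ((Matrix.fromBlocks
        (A * X + X * Aᵀ + B * Bᵀ) (X * Cᵀ + B * Dᵀ)
        (C * X + D * Bᵀ) (D * Dᵀ - γ ^ 2 • (1 : Matrix (Fin m) (Fin m) ℝ))).map
          Complex.ofReal) =
      Matrix.fromBlocks (Ac * Xc + Xc * Acᴴ + Bc * Bcᴴ) (Xc * Ccᴴ + Bc * Dcᴴ)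
        (Cc * Xc + Dc * Bcᴴ) (Dc * Dcᴴ - ((γ ^ 2 : ℝ) : ℂ) • 1) := by
    rw [Matrix.fromBlocks_map]
    have msub : ∀ {a b : Type} (M N : Matrix a b ℝ),
        (M - N).map Complex.ofReal = M.map Complex.ofReal - N.map Complex.ofReal :=
      fun M N => Matrix.map_sub _ (by simp) M N
    have msm : ((γ ^ 2 • (1 : Matrix (Fin m) (Fin m) ℝ)).map Complex.ofReal) =
        ((γ ^ 2 : ℝ) : ℂ) • (1 : Matrix (Fin m) (Fin m) ℂ) := by
      ext i j
      by_cases h : i = j <;>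
        simp [Matrix.smul_apply, Matrix.one_apply, Matrix.map_apply, h]
    have hb1 : (A * X + X * Aᵀ + B * Bᵀ).map Complex.ofReal =
        Ac * Xc + Xc * Acᴴ + Bc * Bcᴴ := by
      rw [map_add', map_add', map_mul', map_mul', map_mul', ← conjT_map A, ← conjT_map B]
    have hb2 : (X * Cᵀ + B * Dᵀ).map Complex.ofReal = Xc * Ccᴴ + Bc * Dcᴴ := by
      rw [map_add', map_mul', map_mul', ← conjT_map C, ← conjT_map D]
    have hb3 : (C * X + D * Bᵀ).map Complex.ofReal = Cc * Xc + Dc * Bcᴴ := by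
      rw [map_add', map_mul', map_mul', ← conjT_map B]
    have hb4 : (D * Dᵀ - γ ^ 2 • (1 : Matrix (Fin m) (Fin m) ℝ)).map Complex.ofReal =
        Dc * Dcᴴ - ((γ ^ 2 : ℝ) : ℂ) • 1 := by
      rw [msub, map_mul', ← conjT_map D, msm]
    rw [hb1, hb2, hb3, hb4]
  -- bound on the conjugate transpose of G
  have hGH : ∀ u : Fin m → ℂ,
      (star (Gᴴ *ᵥ u) ⬝ᵥ (Gᴴ *ᵥ u)).re ≤ (γ ^ 2 - δ) * (star u ⬝ᵥ u).re := by
    intro u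
    set ξ : Fin n → ℂ := (S⁻¹)ᴴ *ᵥ (Ccᴴ *ᵥ u) with hξ
    have hGHu : Gᴴ *ᵥ u = Bcᴴ *ᵥ ξ + Dcᴴ *ᵥ u := by
      rw [hG, Matrix.conjTranspose_add, Matrix.conjTranspose_mul, Matrix.conjTranspose_mul,
        Matrix.add_mulVec, hξ, Matrix.mulVec_mulVec, Matrix.mulVec_mulVec,
        ← Matrix.mul_assoc]
    have hη : Acᴴ *ᵥ ξ + Ccᴴ *ᵥ u = (-s) • ξ := by
      have h1 : Sᴴ *ᵥ ξ = Ccᴴ *ᵥ u := by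
        rw [hξ, Matrix.mulVec_mulVec, hSinvH, Matrix.one_mulVec]
      have h2 : Sᴴ = (-s) • 1 - Acᴴ := by
        rw [hS, Matrix.conjTranspose_sub, Matrix.conjTranspose_smul, Matrix.conjTranspose_one,
          hstars]
      rw [h2, Matrix.sub_mulVec, Matrix.smul_mulVec, Matrix.one_mulVec] at h1
      rw [← h1]
      abel
    set v : (Fin n ⊕ Fin m) → ℂ := Sum.elim ξ u with hv
    have hquad := quad_identity Ac Xc Bc Cc Dc ((γ ^ 2 : ℝ) : ℂ) ξ u
    rw [hη] at hquad
    have hcross : star ξ ⬝ᵥ (Xc *ᵥ (-s) • ξ) + star ((-s) • ξ) ⬝ᵥ (Xc *ᵥ ξ) = 0 := by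
      rw [Matrix.mulVec_smul, dotProduct_smul, star_smul, smul_dotProduct,
        star_neg, hstars, neg_neg, smul_eq_mul, smul_eq_mul]
      ring
    rw [hcross, zero_add] at hquad
    -- real parts
    have hre1 : (star v ⬝ᵥ
        (((Matrix.fromBlocks (A * X + X * Aᵀ + B * Bᵀ) (X * Cᵀ + B * Dᵀ) (C * X + D * Bᵀ)
          (D * Dᵀ - γ ^ 2 • (1 : Matrix (Fin m) (Fin m) ℝ))).map Complex.ofReal) *ᵥ v)).re
        ≤ -(δ * (star u ⬝ᵥ u).re) := by
      have hq := re_quad (Matrix.fromBlocks (A * X + X * Aᵀ + B * Bᵀ) (X * Cᵀ + B * Dᵀ)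
        (C * X + D * Bᵀ) (D * Dᵀ - γ ^ 2 • (1 : Matrix (Fin m) (Fin m) ℝ))) v
      set a : (Fin n ⊕ Fin m) → ℝ := fun i => (v i).re with ha
      set b : (Fin n ⊕ Fin m) → ℝ := fun i => (v i).im with hb
      have hna := hδle a
      have hnb := hδle b
      have hflip : ∀ x : (Fin n ⊕ Fin m) → ℝ,
          x ⬝ᵥ ((-(Matrix.fromBlocks (A * X + X * Aᵀ + B * Bᵀ) (X * Cᵀ + B * Dᵀ)
            (C * X + D * Bᵀ) (D * Dᵀ - γ ^ 2 • (1 : Matrix (Fin m) (Fin m) ℝ)))) *ᵥ x) =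
          -(x ⬝ᵥ ((Matrix.fromBlocks (A * X + X * Aᵀ + B * Bᵀ) (X * Cᵀ + B * Dᵀ)
            (C * X + D * Bᵀ) (D * Dᵀ - γ ^ 2 • (1 : Matrix (Fin m) (Fin m) ℝ))) *ᵥ x)) := by
        intro x
        rw [Matrix.neg_mulVec, dotProduct_neg]
      rw [hflip] at hna hnb
      have husum : (star u ⬝ᵥ u).re ≤ (∑ i, a i ^ 2) + (∑ i, b i ^ 2) := by
        have h1 : (star u ⬝ᵥ u).re = ∑ j, ((u j).re ^ 2 + (u j).im ^ 2) := by
          simp only [dotProduct, Pi.star_apply, Complex.re_sum]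
          refine Finset.sum_congr rfl fun j _ => ?_
          simp [Complex.mul_re]
          ring
        have h2 : (∑ i, a i ^ 2) + (∑ i, b i ^ 2) =
            (∑ j, ((u j).re ^ 2 + (u j).im ^ 2)) +
            (∑ j, ((ξ j).re ^ 2 + (ξ j).im ^ 2)) := by
          rw [← Finset.sum_add_distrib,
            Fintype.sum_sum_type (f := fun i => a i ^ 2 + b i ^ 2), add_comm]
          congr 1
          all_goals exact Finset.sum_congr rfl fun j _ => by simp [ha, hb, hv]
        have h3 : 0 ≤ ∑ j, ((ξ j).re ^ 2 + (ξ j).im ^ 2) := by positivity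
        rw [h1]
        linarith
      have := add_le_add hna hnb
      rw [hq]
      nlinarith [this, husum]
    rw [hmap] at hre1
    rw [hv, hquad] at hre1
    have hsplit : (star (Bcᴴ *ᵥ ξ + Dcᴴ *ᵥ u) ⬝ᵥ (Bcᴴ *ᵥ ξ + Dcᴴ *ᵥ u) -
        ((γ ^ 2 : ℝ) : ℂ) * (star u ⬝ᵥ u)).re =
        (star (Bcᴴ *ᵥ ξ + Dcᴴ *ᵥ u) ⬝ᵥ (Bcᴴ *ᵥ ξ + Dcᴴ *ᵥ u)).re -
        γ ^ 2 * (star u ⬝ᵥ u).re := by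
      rw [Complex.sub_re, Complex.re_ofReal_mul]
    rw [hsplit] at hre1
    rw [hGHu]
    linarith
  -- norm form of the bound for Gᴴ
  have hc0 : 0 ≤ γ ^ 2 - δ := by linarith
  have hcsq : c ^ 2 = γ ^ 2 - δ := Real.sq_sqrt hc0
  have hcnn : 0 ≤ c := Real.sqrt_nonneg _
  have hGHn : ∀ u : Fin m → ℂ,
      ‖(WithLp.equiv 2 (Fin p → ℂ)).symm (Gᴴ *ᵥ u)‖ ≤
        c * ‖(WithLp.equiv 2 (Fin m → ℂ)).symm u‖ := by
    intro u
    have h1 := euc_normsq (Gᴴ *ᵥ u)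
    have h2 := euc_normsq u
    have h3 := hGH u
    have h4 : ‖(WithLp.equiv 2 (Fin p → ℂ)).symm (Gᴴ *ᵥ u)‖ ^ 2 ≤
        (c * ‖(WithLp.equiv 2 (Fin m → ℂ)).symm u‖) ^ 2 := by
      rw [mul_pow, hcsq, h1, h2]
      exact h3
    have := Real.sqrt_le_sqrt h4
    rwa [Real.sqrt_sq (norm_nonneg _), Real.sqrt_sq (by positivity)] at this
  -- norm bound for G itself via Cauchy-Schwarz
  have hGn : ∀ x : Fin p → ℂ,
      ‖(WithLp.equiv 2 (Fin m → ℂ)).symm (G *ᵥ x)‖ ≤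
        c * ‖(WithLp.equiv 2 (Fin p → ℂ)).symm x‖ := by
    intro x
    have h2 : star (G *ᵥ x) ⬝ᵥ (G *ᵥ x) = star x ⬝ᵥ (Gᴴ *ᵥ (G *ᵥ x)) := star_dot G x _
    refine sq_trick (norm_nonneg _) hcnn (norm_nonneg _) ?_
    rw [euc_normsq, h2]
    calc (star x ⬝ᵥ (Gᴴ *ᵥ (G *ᵥ x))).re
        ≤ ‖(WithLp.equiv 2 (Fin p → ℂ)).symm x‖ *
          ‖(WithLp.equiv 2 (Fin p → ℂ)).symm (Gᴴ *ᵥ (G *ᵥ x))‖ := euc_cs _ _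
      _ ≤ ‖(WithLp.equiv 2 (Fin p → ℂ)).symm x‖ *
          (c * ‖(WithLp.equiv 2 (Fin m → ℂ)).symm (G *ᵥ x)‖) :=
        mul_le_mul_of_nonneg_left (hGHn _) (norm_nonneg _)
  -- operator norm bound
  rw [sigmaMax]
  apply ContinuousLinearMap.opNorm_le_bound _ hcnn
  intro y
  have happ : (LinearMap.toContinuousLinearMap (Matrix.toEuclideanLin G)) y =
      (WithLp.equiv 2 (Fin m → ℂ)).symm (G *ᵥ (WithLp.equiv 2 (Fin p → ℂ)) y) := by
    rw [LinearMap.coe_toContinuousLinearMap', Matrix.toEuclideanLin_apply]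
    rfl
  rw [happ]
  have := hGn ((WithLp.equiv 2 (Fin p → ℂ)) y)
  simpa using this

end BRLaux

/-- Bounded real lemma: feasibility of the H∞ LMI implies `A` is Hurwitz and
`sup_ω σ_max(G(iω)) < γ` for `G(s) = C (sI - A)⁻¹ B + D`. -/
theorem stmt5 {n m p : ℕ} (A : Matrix (Fin n) (Fin n) ℝ) (B : Matrix (Fin n) (Fin p) ℝ)
    (C : Matrix (Fin m) (Fin n) ℝ) (D : Matrix (Fin m) (Fin p) ℝ)
    (X : Matrix (Fin n) (Fin n) ℝ) (hX : X.PosDef) (γ : ℝ) (hγ : 0 < γ)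
    (hLMI : (-(Matrix.fromBlocks
        (A * X + X * Aᵀ + B * Bᵀ) (X * Cᵀ + B * Dᵀ)
        (C * X + D * Bᵀ) (D * Dᵀ - γ ^ 2 • (1 : Matrix (Fin m) (Fin m) ℝ)))).PosDef) :
    Hurwitz A ∧
      (⨆ ω : ℝ, sigmaMax ((C.map Complex.ofReal) *
          (((ω : ℂ) * Complex.I) • (1 : Matrix (Fin n) (Fin n) ℂ) - A.map Complex.ofReal)⁻¹ *
          (B.map Complex.ofReal) + D.map Complex.ofReal)) < γ := by
  classical
  have hXq : ∀ x : Fin n → ℝ, x ≠ 0 → 0 < x ⬝ᵥ (X *ᵥ x) := by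
    intro x hx
    have := hX.dotProduct_mulVec_pos hx
    simpa using this
  obtain ⟨δ₀, hδ₀, hδ₀le⟩ := BRLaux.posdef_delta hLMI
  set δ : ℝ := min δ₀ (γ ^ 2) with hδdef
  have hδpos : 0 < δ := lt_min hδ₀ (by positivity)
  have hδγ : δ ≤ γ ^ 2 := min_le_right _ _
  have hδle : ∀ x : (Fin n ⊕ Fin m) → ℝ, δ * (∑ i, x i ^ 2) ≤
      x ⬝ᵥ ((-(Matrix.fromBlocks
        (A * X + X * Aᵀ + B * Bᵀ) (X * Cᵀ + B * Dᵀ)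
        (C * X + D * Bᵀ) (D * Dᵀ - γ ^ 2 • (1 : Matrix (Fin m) (Fin m) ℝ)))) *ᵥ x) :=
    fun x => le_trans
      (mul_le_mul_of_nonneg_right (min_le_left _ _) (by positivity)) (hδ₀le x)
  -- block (1,1) of the LMI is negative definite
  have h11 : ∀ x : Fin n → ℝ, x ≠ 0 →
      0 < x ⬝ᵥ ((-(A * X + X * Aᵀ + B * Bᵀ)) *ᵥ x) := by
    intro x hx
    have hne : Sum.elim x (0 : Fin m → ℝ) ≠ 0 := by
      intro hc
      apply hx
      funext i
      exact congrFun hc (Sum.inl i)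
    have h := hLMI.dotProduct_mulVec_pos hne
    have hqe : star (Sum.elim x (0 : Fin m → ℝ)) ⬝ᵥ
        ((-(Matrix.fromBlocks
          (A * X + X * Aᵀ + B * Bᵀ) (X * Cᵀ + B * Dᵀ)
          (C * X + D * Bᵀ) (D * Dᵀ - γ ^ 2 • (1 : Matrix (Fin m) (Fin m) ℝ)))) *ᵥ
          Sum.elim x (0 : Fin m → ℝ)) =
        x ⬝ᵥ ((-(A * X + X * Aᵀ + B * Bᵀ)) *ᵥ x) := by
      rw [Matrix.neg_mulVec, dotProduct_neg, Matrix.fromBlocks_mulVec,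
        Matrix.neg_mulVec, dotProduct_neg]
      simp [sumElim_dotProduct_sumElim]
    rw [hqe] at h
    exact h
  -- Lyapunov inequality for A
  have hYq : ∀ x : Fin n → ℝ, x ≠ 0 → 0 < x ⬝ᵥ ((-(A * X + X * Aᵀ)) *ᵥ x) := by
    intro x hx
    have hsplit : (-(A * X + X * Aᵀ)) = -(A * X + X * Aᵀ + B * Bᵀ) + B * Bᵀ := by
      abel
    have hBB : 0 ≤ x ⬝ᵥ ((B * Bᵀ) *ᵥ x) := by
      have h1 : x ⬝ᵥ ((B * Bᵀ) *ᵥ x) = (Bᵀ *ᵥ x) ⬝ᵥ (Bᵀ *ᵥ x) := by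
        rw [← Matrix.mulVec_mulVec, Matrix.dotProduct_mulVec, ← Matrix.transpose_transpose B,
          Matrix.vecMul_transpose, Matrix.transpose_transpose]
      rw [h1]
      exact Finset.sum_nonneg fun i _ => mul_self_nonneg _
    rw [hsplit, Matrix.add_mulVec, dotProduct_add]
    exact add_pos_of_pos_of_nonneg (h11 x hx) hBB
  have hHur : Hurwitz A := BRLaux.hurwitz_of_lyap A X hXq hYq
  refine ⟨hHur, ?_⟩
  have key : ∀ ω : ℝ, sigmaMax ((C.map Complex.ofReal) *
      (((ω : ℂ) * Complex.I) • (1 : Matrix (Fin n) (Fin n) ℂ) - A.map Complex.ofReal)⁻¹ *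
      (B.map Complex.ofReal) + D.map Complex.ofReal) ≤ Real.sqrt (γ ^ 2 - δ) :=
    fun ω => BRLaux.omega_bound A B C D X γ hγ δ hδpos hδγ hδle hHur ω
  have hlt : Real.sqrt (γ ^ 2 - δ) < γ := by
    have h1 : γ ^ 2 - δ < γ ^ 2 := by linarith
    calc Real.sqrt (γ ^ 2 - δ) < Real.sqrt (γ ^ 2) := Real.sqrt_lt_sqrt (by linarith) h1
      _ = γ := Real.sqrt_sq hγ.le
  exact lt_of_le_of_lt (ciSup_le key) hlt
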